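/- Define ρ(ε, δ) = [2 log(√δ √(e^ε + δ − 1) + e^{ε/2}) − 2 log(1 − δ)] / [ε − 2 log(1 − δ)]. Then for all ε ≥ 0 and 0 ≤ δ < 1 (not both zero), 1 ≤ ρ(ε, δ) < 2, and both bounds are sharp. -/

import Mathlib

/-- The ratio `ρ(ε, δ)` of the minimal Laplace and Logistic DP scales. -/
noncomputable def scaleRatio (ε δ : ℝ) : ℝ :=
  (2 * Real.log (Real.sqrt δ * Real.sqrt (Real.exp ε + δ - 1) + Real.exp (ε / 2)) -
      2 * Real.log (1 - δ)) /
    (ε - 2 * Real.log (1 - δ))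

lemma aux_pos (u a : ℝ) (hu : 0 ≤ u) (ha0 : 0 ≤ a) (ha1 : a < 1)
    (h : 0 < u ∨ 0 < a) :
    0 < 2*a^3 - a^4 + 6*u*a^2 - 2*u*a^3 + u^2 + 3*u^2*a + 3*u^2*a^2 - u^2*a^3
      + 2*u^3 + 2*u^3*a + u^4 := by
  have t2 : 0 ≤ u*a^2*(6-2*a) := mul_nonneg (mul_nonneg hu (sq_nonneg a)) (by linarith)
  have t3 : 0 ≤ u^2*(1+3*a+3*a^2-a^3) := by nlinarith [sq_nonneg u, sq_nonneg a]
  have t4 : 0 ≤ u^3*(2+2*a) := by positivity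
  have t5 : 0 ≤ u^4 := by positivity
  rcases h with h | h
  · have t1 : 0 ≤ a^3*(2-a) := mul_nonneg (pow_nonneg ha0 3) (by linarith)
    have t3' : 0 < u^2*(1+3*a+3*a^2-a^3) := by nlinarith [sq_nonneg a, mul_pos h h]
    linarith
  · have t1 : 0 < a^3*(2-a) := mul_pos (pow_pos h 3) (by linarith)
    linarith

lemma key_ineq (x a : ℝ) (hx : 1 ≤ x) (ha0 : 0 ≤ a) (ha1 : a < 1)
    (hor : 1 < x ∨ 0 < a) :
    a * (1 - a) ^ 2 * (x ^ 2 + a - 1) < x ^ 2 * (x + a - 1) ^ 2 := by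
  have h := aux_pos (x - 1) a (by linarith) ha0 ha1
    (by rcases hor with h | h; exacts [Or.inl (by linarith), Or.inr h])
  nlinarith [h]

/-- For all `ε ≥ 0`, `0 ≤ δ < 1` (not both zero), `1 ≤ ρ(ε, δ) < 2`,
and both bounds are sharp. -/
theorem rho_bounds :
    (∀ ε δ : ℝ, 0 ≤ ε → 0 ≤ δ → δ < 1 → ¬(ε = 0 ∧ δ = 0) →
        1 ≤ scaleRatio ε δ ∧ scaleRatio ε δ < 2) ∧
      (∃ ε δ : ℝ, 0 ≤ ε ∧ 0 ≤ δ ∧ δ < 1 ∧ ¬(ε = 0 ∧ δ = 0) ∧ scaleRatio ε δ = 1) ∧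
      (∀ c : ℝ, c < 2 → ∃ ε δ : ℝ,
        0 ≤ ε ∧ 0 ≤ δ ∧ δ < 1 ∧ ¬(ε = 0 ∧ δ = 0) ∧ c < scaleRatio ε δ) := by
  refine ⟨?_, ⟨1, 0, by norm_num, le_refl 0, by norm_num, by norm_num, ?_⟩, ?_⟩
  · -- main bounds
    intro ε δ hε hδ0 hδ1 hne
    set x := Real.exp (ε / 2) with hxdef
    set s := Real.sqrt δ with hsdef
    set w := Real.sqrt (Real.exp ε + δ - 1) with hwdef
    have hx : (1 : ℝ) ≤ x := Real.one_le_exp (by linarith)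
    have hx2 : x ^ 2 = Real.exp ε := by
      rw [hxdef, sq, ← Real.exp_add]; ring_nf
    have hs0 : 0 ≤ s := Real.sqrt_nonneg δ
    have hs2 : s ^ 2 = δ := Real.sq_sqrt hδ0
    have hexpε : (1 : ℝ) ≤ Real.exp ε := Real.one_le_exp hε
    have hw0 : 0 ≤ w := Real.sqrt_nonneg _
    have hw2 : w ^ 2 = Real.exp ε + δ - 1 := Real.sq_sqrt (by linarith)
    have h1δ : (0 : ℝ) < 1 - δ := by linarith
    have hb : Real.log (1 - δ) ≤ 0 := Real.log_nonpos (by linarith) (by linarith)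
    have hD : 0 < ε - 2 * Real.log (1 - δ) := by
      rcases eq_or_lt_of_le hδ0 with h | h
      · have hε' : 0 < ε := by
          rcases eq_or_lt_of_le hε with h' | h'
          · exact absurd ⟨h'.symm, h.symm⟩ hne
          · exact h'
        have : Real.log (1 - δ) = 0 := by rw [← h]; norm_num
        linarith
      · have : Real.log (1 - δ) < 0 := Real.log_neg (by linarith) (by linarith)
        linarith
    have hA0 : 0 < s * w + x := by
      have : 0 ≤ s * w := mul_nonneg hs0 hw0
      linarith
    have hor : 1 < x ∨ 0 < δ := by
      rcases eq_or_lt_of_le hδ0 with h | h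
      · left
        have hε' : 0 < ε := by
          rcases eq_or_lt_of_le hε with h' | h'
          · exact absurd ⟨h'.symm, h.symm⟩ hne
          · exact h'
        have := Real.exp_lt_exp.2 (show (0:ℝ) < ε / 2 by linarith)
        rwa [Real.exp_zero] at this
      · right; exact h
    constructor
    · -- lower bound
      rw [scaleRatio, le_div_iff₀ hD]
      have hlog : ε / 2 ≤ Real.log (s * w + x) := by
        have : x ≤ s * w + x := by
          have : 0 ≤ s * w := mul_nonneg hs0 hw0
          linarith
        calc ε / 2 = Real.log x := (Real.log_exp _).symm
          _ ≤ Real.log (s * w + x) := Real.log_le_log (by positivity) this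
      linarith
    · -- upper bound
      have hRpos : 0 < x * (x - 1 + δ) := by
        rcases hor with h | h
        · exact mul_pos (by linarith) (by linarith)
        · exact mul_pos (by linarith) (by linarith)
      have hkey := key_ineq x δ hx hδ0 hδ1 hor
      have hsq : (s * w * (1 - δ)) ^ 2 < (x * (x - 1 + δ)) ^ 2 := by
        have e1 : (s * w * (1 - δ)) ^ 2 = δ * (1 - δ) ^ 2 * (x ^ 2 + δ - 1) := by
          have : (s * w * (1 - δ)) ^ 2 = s ^ 2 * w ^ 2 * (1 - δ) ^ 2 := by ring
          rw [this, hs2, hw2, ← hx2]; ring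
        have e2 : (x * (x - 1 + δ)) ^ 2 = x ^ 2 * (x + δ - 1) ^ 2 := by ring
        rw [e1, e2]; exact hkey
      have hlt : s * w * (1 - δ) < x * (x - 1 + δ) := by
        have hL0 : 0 ≤ s * w * (1 - δ) := by positivity
        exact lt_of_pow_lt_pow_left₀ 2 hRpos.le hsq
      have hAlt : (s * w + x) * (1 - δ) < Real.exp ε := by
        rw [← hx2]; nlinarith [hlt]
      have hAlt' : s * w + x < Real.exp ε / (1 - δ) := by
        rw [lt_div_iff₀ h1δ]; exact hAlt
      have hlog : Real.log (s * w + x) < ε - Real.log (1 - δ) := by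
        calc Real.log (s * w + x) < Real.log (Real.exp ε / (1 - δ)) :=
              Real.log_lt_log hA0 hAlt'
          _ = ε - Real.log (1 - δ) := by
              rw [Real.log_div (Real.exp_ne_zero ε) (ne_of_gt h1δ), Real.log_exp]
      rw [scaleRatio, div_lt_iff₀ hD]
      linarith
  · -- equality witness: ε = 1, δ = 0
    rw [scaleRatio]
    simp [Real.sqrt_zero, Real.log_exp]
  · -- sharpness of the bound 2
    intro c hc
    set δ := min ((2 - c) / 4) (1 / 4) with hδdef
    have hδ0 : 0 < δ := by
      apply lt_min <;> nlinarith
    have hδq : δ ≤ 1 / 4 := min_le_right _ _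
    have hδ1 : δ < 1 := by linarith
    refine ⟨0, δ, le_refl 0, hδ0.le, hδ1, fun h => by linarith [h.2], ?_⟩
    have h1δ : (0 : ℝ) < 1 - δ := by linarith
    have h1δ' : (0 : ℝ) < 1 + δ := by linarith
    -- rewrite scaleRatio 0 δ
    have hval : scaleRatio 0 δ =
        (2 * Real.log (1 + δ) - 2 * Real.log (1 - δ)) / (0 - 2 * Real.log (1 - δ)) := by
      rw [scaleRatio]
      have : Real.sqrt δ * Real.sqrt (Real.exp 0 + δ - 1) = δ := by
        rw [Real.exp_zero]
        have : (1 : ℝ) + δ - 1 = δ := by ring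
        rw [this, Real.mul_self_sqrt hδ0.le]
      rw [this]
      norm_num [Real.exp_zero]
      ring_nf
    rw [hval]
    have hb : Real.log (1 - δ) < 0 := Real.log_neg (by linarith) (by linarith)
    have ha : 0 < Real.log (1 + δ) := Real.log_pos (by linarith)
    set a := Real.log (1 + δ)
    set b := Real.log (1 - δ)
    have ha2 : δ / (1 + δ) ≤ a := by
      have h := Real.log_le_sub_one_of_pos (show (0:ℝ) < 1 / (1 + δ) by positivity)
      rw [Real.log_div one_ne_zero (ne_of_gt h1δ'), Real.log_one] at h
      have : 1 / (1 + δ) - 1 = -(δ / (1 + δ)) := by field_simp; ring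
      rw [this] at h
      linarith
    have hb2 : -b ≤ δ / (1 - δ) := by
      have h := Real.log_le_sub_one_of_pos (show (0:ℝ) < 1 / (1 - δ) by positivity)
      rw [Real.log_div one_ne_zero (ne_of_gt h1δ), Real.log_one] at h
      have : 1 / (1 - δ) - 1 = δ / (1 - δ) := by field_simp; ring
      linarith [this ▸ h]
    rw [lt_div_iff₀ (by linarith : (0:ℝ) < 0 - 2 * b)]
    -- goal : c * (0 - 2*b) < 2*a - 2*b, i.e. (c-1)*(-2b) < 2a
    have ha2' : δ ≤ a * (1 + δ) := by
      rw [div_le_iff₀ h1δ'] at ha2; linarith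
    have hb2' : -b * (1 - δ) ≤ δ := by
      rw [le_div_iff₀ h1δ] at hb2; linarith
    have hc2 : (c - 1) * (1 + δ) < 1 - δ := by
      have : δ ≤ (2 - c) / 4 := min_le_left _ _
      nlinarith
    rcases le_or_gt c 1 with h | h
    · nlinarith
    · nlinarith [mul_pos (sub_pos.2 h) (neg_pos.2 hb),
        mul_le_mul_of_nonneg_left hb2' (le_of_lt (sub_pos.2 h)),
        mul_pos h1δ h1δ']
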